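/- Let ρ : ℝ^k × ℝ^q × ℝ^d → [0,∞) be a measurable Lebesgue-integrable function (the joint density of (z̃, θ, s_y)), and define m(u) = ∫_{ℝ^k} ∫_{ℝ^q} ρ(z̃, θ, u) dθ dz̃. Fix a constant c > 0. Then for almost every point (z̃₀, θ₀, s₀) with respect to the measure with density ρ relative to Lebesgue measure on ℝ^k × ℝ^q × ℝ^d, the following holds: for every sequence of Lebesgue-measurable sets A_t ⊆ ℝ^d and radii r_t > 0 such that A_t ⊆ closedBall(s₀, r_t), vol(A_t) ≥ c · vol(closedBall(s₀, r_t)) for all t, and vol(A_t) → 0 as t → ∞, one has (∫_{A_t} ρ(z̃₀, θ₀, u) du) / (∫_{A_t} m(u) du) → ρ(z̃₀, θ₀, s₀) / m(s₀). -/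

import Mathlib

open MeasureTheory Filter Metric
open scoped ENNReal NNReal Topology

/-- If sets of vanishing volume occupy a fixed proportion of closed balls, the radii tend to 0. -/
lemma abcP_radius_tendsto_zero {d : ℕ} (s0 : EuclideanSpace ℝ (Fin d)) (c : ℝ) (hc : 0 < c)
    (A : ℕ → Set (EuclideanSpace ℝ (Fin d))) (r : ℕ → ℝ) (hr : ∀ t, 0 < r t)
    (hAc : ∀ t, ENNReal.ofReal c * volume (Metric.closedBall s0 (r t)) ≤ volume (A t))
    (hvol : Tendsto (fun t => volume (A t)) atTop (nhds 0)) :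
    Tendsto r atTop (nhds 0) := by
  have hc0 : ENNReal.ofReal c ≠ 0 := by simp [hc, hc.le]
  have hc1 : ENNReal.ofReal c ≠ ⊤ := ENNReal.ofReal_ne_top
  -- volumes of the balls tend to 0
  have hball : Tendsto (fun t => volume (Metric.closedBall s0 (r t))) atTop (nhds 0) := by
    have hle : ∀ t, volume (Metric.closedBall s0 (r t)) ≤ (ENNReal.ofReal c)⁻¹ * volume (A t) := by
      intro t
      calc volume (Metric.closedBall s0 (r t))
          = (ENNReal.ofReal c)⁻¹ * (ENNReal.ofReal c * volume (Metric.closedBall s0 (r t))) := by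
            rw [← mul_assoc, ENNReal.inv_mul_cancel hc0 hc1, one_mul]
        _ ≤ (ENNReal.ofReal c)⁻¹ * volume (A t) := by gcongr; exact hAc t
    have h2 : Tendsto (fun t => (ENNReal.ofReal c)⁻¹ * volume (A t)) atTop (nhds 0) := by
      have := ENNReal.Tendsto.const_mul (a := (ENNReal.ofReal c)⁻¹) hvol
        (Or.inr (by simp [ENNReal.inv_ne_top, hc0]))
      simpa using this
    exact tendsto_of_tendsto_of_tendsto_of_le_of_le tendsto_const_nhds h2
      (fun t => zero_le) hle
  -- hence the radii to the d-th power tend to 0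
  have hform : ∀ t, volume (Metric.closedBall s0 (r t))
      = ENNReal.ofReal (r t ^ d) * volume (Metric.ball (0 : EuclideanSpace ℝ (Fin d)) 1) := by
    intro t
    rw [Measure.addHaar_closedBall volume s0 (hr t).le, finrank_euclideanSpace_fin]
  have hK0 : volume (Metric.ball (0 : EuclideanSpace ℝ (Fin d)) 1) ≠ 0 :=
    (measure_ball_pos _ _ one_pos).ne'
  have hKtop : volume (Metric.ball (0 : EuclideanSpace ℝ (Fin d)) 1) ≠ ⊤ :=
    measure_ball_lt_top.ne
  have hpow' : Tendsto (fun t => ENNReal.ofReal (r t ^ d)) atTop (nhds 0) := by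
    have h2 : Tendsto (fun t => volume (Metric.closedBall s0 (r t)) *
        (volume (Metric.ball (0 : EuclideanSpace ℝ (Fin d)) 1))⁻¹) atTop (nhds 0) := by
      have := ENNReal.Tendsto.mul_const (b := (volume (Metric.ball (0 : EuclideanSpace ℝ (Fin d)) 1))⁻¹)
        hball (Or.inr (by simp [ENNReal.inv_ne_top, hK0]))
      simpa using this
    refine h2.congr fun t => ?_
    rw [hform t, mul_assoc, ENNReal.mul_inv_cancel hK0 hKtop, mul_one]
  have hpow : Tendsto (fun t => r t ^ d) atTop (nhds 0) := by
    have h3 := (ENNReal.tendsto_toReal (show (0:ℝ≥0∞) ≠ ⊤ by simp)).comp hpow'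
    have heq : (fun t => ((ENNReal.ofReal (r t ^ d))).toReal) = fun t => r t ^ d :=
      funext fun t => ENNReal.toReal_ofReal (pow_nonneg (hr t).le d)
    simpa [Function.comp_def, heq] using h3
  -- conclude
  rw [tendsto_order]
  constructor
  · intro a ha
    exact Eventually.of_forall fun t => ha.trans (hr t)
  · intro a ha
    have hm : (0:ℝ) < min a 1 := lt_min ha one_pos
    have : ∀ᶠ t in atTop, r t ^ d < (min a 1) ^ d :=
      hpow.eventually (eventually_lt_nhds (by positivity))
    filter_upwards [this] with t ht
    by_contra hcon
    push_neg at hcon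
    have : min a 1 ≤ r t := le_trans (min_le_left _ _) hcon
    exact absurd (pow_le_pow_left₀ hm.le this d) (not_le.2 ht)

/-- a.e. Lebesgue point property along the radii `1/(n+1)`, in `ℝ≥0∞` form. -/
lemma abcP_ae_lebesgue_point {d : ℕ} (g : EuclideanSpace ℝ (Fin d) → ℝ)
    (hg : Integrable g volume) :
    ∀ᵐ s ∂(volume : Measure (EuclideanSpace ℝ (Fin d))),
      Tendsto (fun n : ℕ =>
        (∫⁻ y in Metric.closedBall s (1/((n:ℝ)+1)), (‖g y - g s‖₊ : ℝ≥0∞) ∂volume) /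
          volume (Metric.closedBall s (1/((n:ℝ)+1)))) atTop (nhds 0) := by
  have hloc : LocallyIntegrable g volume := hg.locallyIntegrable
  filter_upwards [IsUnifLocDoublingMeasure.ae_tendsto_average_norm_sub (μ := volume) hloc 1] with s hs
  have hdel : Tendsto (fun n : ℕ => 1/((n:ℝ)+1)) atTop (𝓝[>] (0:ℝ)) := by
    refine tendsto_nhdsWithin_of_tendsto_nhds_of_eventually_within _
      tendsto_one_div_add_atTop_nhds_zero_nat
      (Eventually.of_forall fun n => Set.mem_Ioi.2 (by positivity))
  have havg := hs (fun _ : ℕ => s) (fun n : ℕ => 1/((n:ℝ)+1)) hdel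
    (Eventually.of_forall fun n => by
      simp [Metric.mem_closedBall]
      positivity)
  have havg' : Tendsto (fun n : ℕ =>
      ⨍ y in Metric.closedBall s (1/((n:ℝ)+1)), ‖g y - g s‖ ∂volume) atTop (nhds 0) := by
    simpa using havg
  -- identify J with ofReal of the average
  have hofReal := ENNReal.tendsto_ofReal (a := 0) havg'
  rw [ENNReal.ofReal_zero] at hofReal
  refine hofReal.congr fun n => ?_
  set B := Metric.closedBall s (1/((n:ℝ)+1)) with hB
  have hBmeas : MeasurableSet B := measurableSet_closedBall
  have hB0 : volume B ≠ 0 := (measure_closedBall_pos _ _ (by positivity)).ne'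
  have hBtop : volume B ≠ ⊤ := measure_closedBall_lt_top.ne
  have hint : IntegrableOn (fun y => g y - g s) B volume :=
    (hg.integrableOn.sub (integrableOn_const hBtop))
  have hL : ∫⁻ y in B, (‖g y - g s‖₊ : ℝ≥0∞) ∂volume
      = ENNReal.ofReal (∫ y in B, ‖g y - g s‖ ∂volume) := by
    rw [ofReal_integral_eq_lintegral_ofReal hint.norm
      (Eventually.of_forall fun y => norm_nonneg _)]
    congr 1
    ext y
    exact (ofReal_norm (g y - g s)).symm
  rw [setAverage_eq, hL, smul_eq_mul, ← div_eq_inv_mul, measureReal_def,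
    ENNReal.ofReal_div_of_pos (ENNReal.toReal_pos hB0 hBtop), ENNReal.ofReal_toReal hBtop]

/-- Key quantitative step: from the sequential Lebesgue point property at `s0`, averages over
measurable sets of bounded eccentricity shrinking to `s0` converge. -/
lemma abcP_key_avg_tendsto {d : ℕ} (g : EuclideanSpace ℝ (Fin d) → ℝ)
    (hg : LocallyIntegrable g volume) (s0 : EuclideanSpace ℝ (Fin d))
    (hleb : Tendsto (fun n : ℕ =>
      (∫⁻ y in Metric.closedBall s0 (1/((n:ℝ)+1)), (‖g y - g s0‖₊ : ℝ≥0∞) ∂volume) /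
        volume (Metric.closedBall s0 (1/((n:ℝ)+1)))) atTop (nhds 0))
    (c : ℝ) (hc : 0 < c)
    (A : ℕ → Set (EuclideanSpace ℝ (Fin d))) (r : ℕ → ℝ)
    (hA : ∀ t, MeasurableSet (A t)) (hr : ∀ t, 0 < r t)
    (hAr : ∀ t, A t ⊆ Metric.closedBall s0 (r t))
    (hAc : ∀ t, ENNReal.ofReal c * volume (Metric.closedBall s0 (r t)) ≤ volume (A t))
    (hr0 : Tendsto r atTop (nhds 0)) :
    Tendsto (fun t => (∫ u in A t, g u) / (volume (A t)).toReal) atTop (nhds (g s0)) := by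
  classical
  set J : ℕ → ℝ≥0∞ := fun n =>
    (∫⁻ y in Metric.closedBall s0 (1/((n:ℝ)+1)), (‖g y - g s0‖₊ : ℝ≥0∞) ∂volume) /
      volume (Metric.closedBall s0 (1/((n:ℝ)+1))) with hJdef
  set N : ℕ → ℕ := fun t => ⌊1 / r t⌋₊ with hNdef
  have hrpos : Tendsto r atTop (𝓝[>] (0:ℝ)) :=
    tendsto_nhdsWithin_of_tendsto_nhds_of_eventually_within _ hr0
      (Eventually.of_forall fun t => Set.mem_Ioi.2 (hr t))
  have hNtop : Tendsto N atTop atTop := by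
    refine tendsto_nat_floor_atTop.comp ?_
    have : Tendsto (fun t => (r t)⁻¹) atTop atTop := tendsto_inv_nhdsGT_zero.comp hrpos
    simpa [one_div] using this
  have hNseq : Tendsto (fun t => N t - 1) atTop atTop :=
    (tendsto_sub_atTop_nat 1).comp hNtop
  have hJ : Tendsto (fun t => (J (N t - 1)).toReal) atTop (nhds 0) := by
    have := (ENNReal.tendsto_toReal (show (0:ℝ≥0∞) ≠ ⊤ by simp)).comp (hleb.comp hNseq)
    simpa [Function.comp_def] using this
  have hpsi : Tendsto (fun t => (2^d / c) * (J (N t - 1)).toReal) atTop (nhds 0) := by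
    simpa using hJ.const_mul ((2:ℝ)^d / c)
  rw [tendsto_iff_dist_tendsto_zero]
  refine squeeze_zero' (Eventually.of_forall fun t => dist_nonneg) ?_ hpsi
  have hev : ∀ᶠ t in atTop, r t < 1/2 := hr0.eventually (eventually_lt_nhds (by norm_num))
  filter_upwards [hev] with t hrt
  set n := N t - 1 with hn
  have h1r : 2 < 1 / r t := by
    rw [lt_div_iff₀ (hr t)]; linarith
  have hN2 : 2 ≤ N t := Nat.le_floor (by push_cast; linarith)
  have hNpos : (0:ℝ) < (N t : ℝ) := by
    have : 0 < N t := lt_of_lt_of_le (by norm_num) hN2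
    exact_mod_cast this
  have hn1 : ((n:ℝ)+1) = (N t : ℝ) := by
    have : n + 1 = N t := Nat.succ_pred_eq_of_pos (lt_of_lt_of_le (by norm_num) hN2)
    exact_mod_cast this
  set ρn : ℝ := 1/((n:ℝ)+1) with hρdef
  have hρpos : 0 < ρn := by positivity
  have hfloor : (N t : ℝ) ≤ 1 / r t := Nat.floor_le (by positivity)
  have hrρ : r t ≤ ρn := by
    rw [hρdef, hn1, le_div_iff₀ hNpos, mul_comm]
    calc (N t : ℝ) * r t ≤ (1 / r t) * r t := by
          exact mul_le_mul_of_nonneg_right hfloor (hr t).le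
      _ = 1 := one_div_mul_cancel (hr t).ne'
  have hρ2r : ρn ≤ 2 * r t := by
    have hlt : 1 / r t < (N t : ℝ) + 1 := Nat.lt_floor_add_one _
    have h1 : 1 < ((N t : ℝ) + 1) * r t := by
      rw [← div_lt_iff₀ (hr t)] at *; linarith
    rw [hρdef, hn1, div_le_iff₀ hNpos]
    nlinarith
  set B := Metric.closedBall s0 (r t) with hB
  set B' := Metric.closedBall s0 ρn with hB'
  have hBB' : B ⊆ B' := Metric.closedBall_subset_closedBall hrρ
  have hvolA_pos : 0 < volume (A t) :=
    lt_of_lt_of_le (ENNReal.mul_pos (by simp [hc]) (measure_closedBall_pos _ _ (hr t)).ne')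
      (hAc t)
  have hvolA_top : volume (A t) < ⊤ :=
    lt_of_le_of_lt (measure_mono (hAr t)) measure_closedBall_lt_top
  set V := (volume (A t)).toReal with hV
  have hVpos : 0 < V := ENNReal.toReal_pos hvolA_pos.ne' hvolA_top.ne
  have hgB' : IntegrableOn g B' volume := hg.integrableOn_isCompact (isCompact_closedBall _ _)
  have hB'top : volume B' ≠ ⊤ := measure_closedBall_lt_top.ne
  have hsub : IntegrableOn (fun y => g y - g s0) B' volume :=
    hgB'.sub (integrableOn_const hB'top)
  have habs : IntegrableOn (fun y => |g y - g s0|) B' volume := hsub.abs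
  have hintA : IntegrableOn g (A t) volume := hgB'.mono_set ((hAr t).trans hBB')
  have hconstA : IntegrableOn (fun _ => g s0) (A t) volume :=
    integrableOn_const hvolA_top.ne
  have h1 : ∫ u in A t, (g u - g s0) ∂volume = (∫ u in A t, g u) - g s0 * V := by
    rw [integral_sub hintA hconstA, setIntegral_const, smul_eq_mul, measureReal_def, ← hV]; ring
  have h2 : dist ((∫ u in A t, g u) / V) (g s0)
      = |∫ u in A t, (g u - g s0) ∂volume| / V := by
    have heq : (∫ u in A t, g u) / V - g s0 = (∫ u in A t, (g u - g s0) ∂volume) / V := by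
      rw [h1]; field_simp
    rw [Real.dist_eq, heq, abs_div, abs_of_pos hVpos]
  have h3 : |∫ u in A t, (g u - g s0) ∂volume| ≤ ∫ y in B', |g y - g s0| ∂volume := by
    refine le_trans ?_ (setIntegral_mono_set habs
      (Eventually.of_forall fun y => abs_nonneg _)
      (HasSubset.Subset.eventuallyLE ((hAr t).trans hBB')))
    have := norm_integral_le_integral_norm (μ := volume.restrict (A t))
      (fun u => g u - g s0)
    simpa [Real.norm_eq_abs] using this
  have hLtop : (∫⁻ y in B', (‖g y - g s0‖₊ : ℝ≥0∞) ∂volume) ≠ ⊤ := hsub.2.ne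
  have hB'pos : 0 < (volume B').toReal :=
    ENNReal.toReal_pos (measure_closedBall_pos _ _ hρpos).ne' hB'top
  have h4 : ∫ y in B', |g y - g s0| ∂volume = (J n).toReal * (volume B').toReal := by
    have hnorm : ∫ y in B', |g y - g s0| ∂volume
        = (∫⁻ y in B', (‖g y - g s0‖₊ : ℝ≥0∞) ∂volume).toReal := by
      have := integral_norm_eq_lintegral_enorm (μ := volume.restrict B')
        (f := fun y => g y - g s0) hsub.aestronglyMeasurable
      simpa [Real.norm_eq_abs, enorm_eq_nnnorm] using this
    rw [hnorm, hJdef]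
    simp only []
    rw [ENNReal.toReal_div]
    rw [← hρdef, ← hB', div_mul_cancel₀ _ hB'pos.ne']
  have hKb : (0:ℝ) ≤ (volume (Metric.ball (0 : EuclideanSpace ℝ (Fin d)) 1)).toReal :=
    ENNReal.toReal_nonneg
  have hBvol : (volume B).toReal
      = r t ^ d * (volume (Metric.ball (0 : EuclideanSpace ℝ (Fin d)) 1)).toReal := by
    rw [hB, Measure.addHaar_closedBall volume s0 (hr t).le, finrank_euclideanSpace_fin,
      ENNReal.toReal_mul, ENNReal.toReal_ofReal (pow_nonneg (hr t).le d)]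
  have hB'vol : (volume B').toReal
      = ρn ^ d * (volume (Metric.ball (0 : EuclideanSpace ℝ (Fin d)) 1)).toReal := by
    rw [hB', Measure.addHaar_closedBall volume s0 hρpos.le, finrank_euclideanSpace_fin,
      ENNReal.toReal_mul, ENNReal.toReal_ofReal (pow_nonneg hρpos.le d)]
  have hcmp : (volume B').toReal ≤ 2^d * (volume B).toReal := by
    rw [hBvol, hB'vol]
    have hpow : ρn ^ d ≤ (2 * r t)^d := pow_le_pow_left₀ hρpos.le hρ2r d
    calc ρn ^ d * (volume (Metric.ball (0 : EuclideanSpace ℝ (Fin d)) 1)).toReal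
        ≤ (2 * r t)^d * (volume (Metric.ball (0 : EuclideanSpace ℝ (Fin d)) 1)).toReal :=
          mul_le_mul_of_nonneg_right hpow hKb
      _ = 2^d * (r t ^ d * (volume (Metric.ball (0 : EuclideanSpace ℝ (Fin d)) 1)).toReal) := by
          rw [mul_pow]; ring
  have hVc : c * (volume B).toReal ≤ V := by
    have := ENNReal.toReal_mono hvolA_top.ne (hAc t)
    rwa [ENNReal.toReal_mul, ENNReal.toReal_ofReal hc.le] at this
  have hBpos : 0 < (volume B).toReal :=
    ENNReal.toReal_pos (measure_closedBall_pos _ _ (hr t)).ne' measure_closedBall_lt_top.ne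
  have hJnn : (0:ℝ) ≤ (J n).toReal := ENNReal.toReal_nonneg
  calc dist ((∫ u in A t, g u) / V) (g s0)
      = |∫ u in A t, (g u - g s0) ∂volume| / V := h2
    _ ≤ ((J n).toReal * (volume B').toReal) / V := by
        have := h3.trans_eq h4
        gcongr
    _ ≤ ((J n).toReal * (2^d * (volume B).toReal)) / (c * (volume B).toReal) := by
        have h5 : (0:ℝ) < c * (volume B).toReal := by positivity
        gcongr
    _ = (2^d / c) * (J n).toReal := by
        field_simp

/-- Parametrized a.e. Lebesgue point property, jointly in the parameter and the point. -/
lemma abcP_ae_prod_lebesgue {P : Type*} [MeasurableSpace P] {μ : Measure P} [SigmaFinite μ]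
    {d : ℕ} (f : P × EuclideanSpace ℝ (Fin d) → ℝ) (hfm : Measurable f)
    (hfi : Integrable f (μ.prod volume)) :
    ∀ᵐ w ∂(μ.prod (volume : Measure (EuclideanSpace ℝ (Fin d)))),
      Tendsto (fun n : ℕ =>
        (∫⁻ y in Metric.closedBall w.2 (1/((n:ℝ)+1)), (‖f (w.1, y) - f w‖₊ : ℝ≥0∞) ∂volume) /
          volume (Metric.closedBall w.2 (1/((n:ℝ)+1)))) atTop (nhds 0) := by
  classical
  set Jn : ℕ → P × EuclideanSpace ℝ (Fin d) → ℝ≥0∞ := fun n w =>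
    (∫⁻ y in Metric.closedBall w.2 (1/((n:ℝ)+1)), (‖f (w.1, y) - f w‖₊ : ℝ≥0∞) ∂volume) /
      volume (Metric.closedBall w.2 (1/((n:ℝ)+1))) with hJn
  have hJmeas : ∀ n, Measurable (Jn n) := by
    intro n
    have hF : Measurable (fun q : (P × EuclideanSpace ℝ (Fin d)) × EuclideanSpace ℝ (Fin d) =>
        (Metric.closedBall q.1.2 (1/((n:ℝ)+1))).indicator
          (fun y => (‖f (q.1.1, y) - f q.1‖₊ : ℝ≥0∞)) q.2) := by
      have hcond : MeasurableSet {q : (P × EuclideanSpace ℝ (Fin d)) × EuclideanSpace ℝ (Fin d) |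
          dist q.2 q.1.2 ≤ 1/((n:ℝ)+1)} :=
        measurableSet_le (measurable_snd.dist measurable_fst.snd) measurable_const
      have hbr : Measurable (fun q : (P × EuclideanSpace ℝ (Fin d)) × EuclideanSpace ℝ (Fin d) =>
          (‖f (q.1.1, q.2) - f q.1‖₊ : ℝ≥0∞)) :=
        ((hfm.comp (measurable_fst.fst.prodMk measurable_snd)).sub
          (hfm.comp measurable_fst)).enorm
      have : (fun q : (P × EuclideanSpace ℝ (Fin d)) × EuclideanSpace ℝ (Fin d) =>
          (Metric.closedBall q.1.2 (1/((n:ℝ)+1))).indicator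
            (fun y => (‖f (q.1.1, y) - f q.1‖₊ : ℝ≥0∞)) q.2)
          = fun q => if dist q.2 q.1.2 ≤ 1/((n:ℝ)+1)
              then (‖f (q.1.1, q.2) - f q.1‖₊ : ℝ≥0∞) else 0 := by
        funext q
        simp [Set.indicator_apply, Metric.mem_closedBall]
      rw [this]
      exact Measurable.ite hcond hbr measurable_const
    have hnum : Measurable (fun w : P × EuclideanSpace ℝ (Fin d) =>
        ∫⁻ y in Metric.closedBall w.2 (1/((n:ℝ)+1)),
          (‖f (w.1, y) - f w‖₊ : ℝ≥0∞) ∂volume) := by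
      have heq : (fun w : P × EuclideanSpace ℝ (Fin d) =>
          ∫⁻ y in Metric.closedBall w.2 (1/((n:ℝ)+1)),
            (‖f (w.1, y) - f w‖₊ : ℝ≥0∞) ∂volume)
          = fun w => ∫⁻ y, (Metric.closedBall w.2 (1/((n:ℝ)+1))).indicator
              (fun y => (‖f (w.1, y) - f w‖₊ : ℝ≥0∞)) y ∂volume := by
        funext w
        rw [lintegral_indicator measurableSet_closedBall]
      rw [heq]
      exact Measurable.lintegral_prod_right' hF
    have hden : (fun w : P × EuclideanSpace ℝ (Fin d) =>
        volume (Metric.closedBall w.2 (1/((n:ℝ)+1))))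
        = fun _ => ENNReal.ofReal ((1/((n:ℝ)+1))^d) *
            volume (Metric.ball (0 : EuclideanSpace ℝ (Fin d)) 1) := by
      funext w
      rw [Measure.addHaar_closedBall volume _ (by positivity), finrank_euclideanSpace_fin]
    have : Jn n = fun w => (∫⁻ y in Metric.closedBall w.2 (1/((n:ℝ)+1)),
        (‖f (w.1, y) - f w‖₊ : ℝ≥0∞) ∂volume) /
          (ENNReal.ofReal ((1/((n:ℝ)+1))^d) *
            volume (Metric.ball (0 : EuclideanSpace ℝ (Fin d)) 1)) := by
      funext w
      rw [hJn]
      simp only []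
      rw [congrFun hden w]
    rw [this]
    exact hnum.div_const _
  set S : Set (P × EuclideanSpace ℝ (Fin d)) :=
    {w | Tendsto (fun n => Jn n w) atTop (nhds 0)} with hS
  have hmeasS : MeasurableSet S := by
    have hchar : S = (fun w => limsup (fun n => Jn n w) atTop) ⁻¹' {0} := by
      ext w
      constructor
      · exact fun h => h.limsup_eq
      · intro h
        refine tendsto_of_liminf_eq_limsup ?_ h
        exact le_antisymm ((liminf_le_limsup (by isBoundedDefault) (by isBoundedDefault)).trans_eq h) zero_le
    rw [hchar]
    exact Measurable.limsup hJmeas (measurableSet_singleton 0)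
  have hae : ∀ᵐ p ∂μ, ∀ᵐ s ∂(volume : Measure (EuclideanSpace ℝ (Fin d))), (p, s) ∈ S := by
    filter_upwards [hfi.prod_right_ae] with p hp
    filter_upwards [abcP_ae_lebesgue_point (fun y => f (p, y)) hp] with s hs
    exact hs
  have hnull : (μ.prod volume) Sᶜ = 0 := by
    rw [Measure.measure_prod_null hmeasS.compl]
    filter_upwards [hae] with p hp
    have : Prod.mk p ⁻¹' Sᶜ = {s | ¬ (p, s) ∈ S} := rfl
    simp only [this, Pi.zero_apply]
    exact ae_iff.1 hp
  have : ∀ᵐ w ∂(μ.prod (volume : Measure (EuclideanSpace ℝ (Fin d)))), w ∈ S :=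
    ae_iff.2 hnull
  exact this

/-- Shorthand for Euclidean spaces. -/
abbrev abcPES (n : ℕ) := EuclideanSpace ℝ (Fin n)

lemma abcP_div_div (a b V : ℝ) (hV : V ≠ 0) : (a / V) / (b / V) = a / b := by
  rcases eq_or_ne b 0 with rfl | hb
  · simp
  · field_simp

/-- Proposition 1 (joint part): the joint ABC-P density converges to the exact joint
posterior density as the acceptance regions shrink with bounded eccentricity. -/
theorem abcP_joint_limit {k q d : ℕ}
    (ρ : (EuclideanSpace ℝ (Fin k)) × (EuclideanSpace ℝ (Fin q)) × (EuclideanSpace ℝ (Fin d)) → ℝ)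
    (hρmeas : Measurable ρ) (hρint : Integrable ρ) (hρnonneg : ∀ x, 0 ≤ ρ x)
    (c : ℝ) (hc : 0 < c)
    (m : EuclideanSpace ℝ (Fin d) → ℝ)
    (hm : ∀ u, m u = ∫ zt, ∫ θ, ρ (zt, θ, u)) :
    ∀ᵐ x ∂(volume.withDensity (fun x => ENNReal.ofReal (ρ x))),
      ∀ (A : ℕ → Set (EuclideanSpace ℝ (Fin d))) (r : ℕ → ℝ),
        (∀ t, MeasurableSet (A t)) →
        (∀ t, 0 < r t) →
        (∀ t, A t ⊆ Metric.closedBall x.2.2 (r t)) →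
        (∀ t, ENNReal.ofReal c * volume (Metric.closedBall x.2.2 (r t)) ≤ volume (A t)) →
        Tendsto (fun t => volume (A t)) atTop (nhds 0) →
        Tendsto (fun t => (∫ u in A t, ρ (x.1, x.2.1, u)) / (∫ u in A t, m u)) atTop
          (nhds (ρ (x.1, x.2.1, x.2.2) / m x.2.2)) := by
  classical
  have hW : (volume : Measure (abcPES k × abcPES q × abcPES d))
      = (volume : Measure (abcPES k)).prod ((volume : Measure (abcPES q)).prod (volume : Measure (abcPES d))) := by
    rw [Measure.volume_eq_prod, Measure.volume_eq_prod]
  have hXY : (volume : Measure (abcPES k × abcPES q)) = (volume : Measure (abcPES k)).prod (volume : Measure (abcPES q)) :=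
    Measure.volume_eq_prod _ _
  set f : (abcPES k × abcPES q) × abcPES d → ℝ := fun w => ρ (w.1.1, w.1.2, w.2) with hf
  have hfm : Measurable f :=
    hρmeas.comp ((measurable_fst.fst).prodMk ((measurable_fst.snd).prodMk measurable_snd))
  have hpres : MeasurePreserving (MeasurableEquiv.prodAssoc : ((abcPES k × abcPES q) × abcPES d) ≃ᵐ (abcPES k × abcPES q × abcPES d))
      (((volume : Measure (abcPES k)).prod (volume : Measure (abcPES q))).prod (volume : Measure (abcPES d)))
      ((volume : Measure (abcPES k)).prod ((volume : Measure (abcPES q)).prod (volume : Measure (abcPES d)))) :=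
    measurePreserving_prodAssoc _ _ _
  have hρint' : Integrable ρ
      ((volume : Measure (abcPES k)).prod ((volume : Measure (abcPES q)).prod (volume : Measure (abcPES d)))) := by
    rw [← hW]; exact hρint
  have hfint : Integrable f
      (((volume : Measure (abcPES k)).prod (volume : Measure (abcPES q))).prod (volume : Measure (abcPES d))) := by
    have := (hpres.integrable_comp hρmeas.aestronglyMeasurable).2 hρint'
    exact this
  have hfintXY : Integrable f ((volume : Measure (abcPES k × abcPES q)).prod (volume : Measure (abcPES d))) := by
    rw [hXY]; exact hfint
  set m' : abcPES d → ℝ := fun u => ∫ p, f (p, u) ∂((volume : Measure (abcPES k)).prod (volume : Measure (abcPES q)))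
    with hm'
  have hm'int : Integrable m' (volume : Measure (abcPES d)) := hfint.swap.integral_prod_left
  have hm'meas : Measurable m' :=
    ((hfm.comp measurable_swap).stronglyMeasurable.integral_prod_right').measurable
  have hmm' : m =ᵐ[(volume : Measure (abcPES d))] m' := by
    filter_upwards [hfint.prod_left_ae] with u hu
    have h2 : m' u = ∫ z, ∫ θ, f ((z, θ), u) := by
      rw [hm']
      exact integral_prod _ hu
    rw [hm u, h2]
  -- the denominator is a.e. nonzero w.r.t. the with-density measure
  set μW := (volume : Measure (abcPES k × abcPES q × abcPES d)).withDensity (fun x => ENNReal.ofReal (ρ x)) with hμW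
  have hac : μW ≪ (volume : Measure (abcPES k × abcPES q × abcPES d)) := withDensity_absolutelyContinuous _ _
  have hmeasT : MeasurableSet {u : abcPES d | m' u = 0} := hm'meas (measurableSet_singleton 0)
  have hmeasE : MeasurableSet ((fun x : abcPES k × abcPES q × abcPES d => x.2.2) ⁻¹' {u : abcPES d | m' u = 0}) :=
    hmeasT.preimage (measurable_snd.snd)
  have hμWE : μW ((fun x : abcPES k × abcPES q × abcPES d => x.2.2) ⁻¹' {u : abcPES d | m' u = 0}) = 0 := by
    rw [hμW, withDensity_apply _ hmeasE]
    have hg : Measurable fun x : abcPES k × abcPES q × abcPES d => ENNReal.ofReal (ρ x) :=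
      ENNReal.measurable_ofReal.comp hρmeas
    rw [hW, ← hpres.map_eq, setLIntegral_map hmeasE hg
      (MeasurableEquiv.prodAssoc).measurable]
    have hpre : ((MeasurableEquiv.prodAssoc :
        ((abcPES k × abcPES q) × abcPES d) ≃ᵐ (abcPES k × abcPES q × abcPES d)) ⁻¹'
          ((fun x : abcPES k × abcPES q × abcPES d => x.2.2) ⁻¹' {u : abcPES d | m' u = 0}))
        = Prod.snd ⁻¹' {u : abcPES d | m' u = 0} := rfl
    rw [hpre]
    have huniv : (Set.univ : Set (abcPES k × abcPES q)) ×ˢ {u : abcPES d | m' u = 0}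
        = Prod.snd ⁻¹' {u : abcPES d | m' u = 0} := by
      ext w; simp
    have hres : ((((volume : Measure (abcPES k)).prod (volume : Measure (abcPES q)))).prod
          (volume : Measure (abcPES d))).restrict (Prod.snd ⁻¹' {u : abcPES d | m' u = 0})
        = (((volume : Measure (abcPES k)).prod (volume : Measure (abcPES q)))).prod
            ((volume : Measure (abcPES d)).restrict {u : abcPES d | m' u = 0}) := by
      rw [← huniv, ← Measure.prod_restrict, Measure.restrict_univ]
    have hgm : Measurable fun w : (abcPES k × abcPES q) × abcPES d =>
        ENNReal.ofReal (ρ (MeasurableEquiv.prodAssoc w)) :=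
      hg.comp (MeasurableEquiv.prodAssoc).measurable
    rw [hres, lintegral_prod_symm _ hgm.aemeasurable]
    have hz : ∀ᵐ u ∂((volume : Measure (abcPES d)).restrict {u : abcPES d | m' u = 0}),
        (∫⁻ p, ENNReal.ofReal (ρ (MeasurableEquiv.prodAssoc (p, u)))
          ∂((volume : Measure (abcPES k)).prod (volume : Measure (abcPES q)))) = 0 := by
      rw [ae_restrict_iff' hmeasT]
      filter_upwards [hfint.prod_left_ae] with u hu hmem
      have h0 : (∫⁻ p, ENNReal.ofReal (ρ (MeasurableEquiv.prodAssoc (p, u)))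
            ∂((volume : Measure (abcPES k)).prod (volume : Measure (abcPES q))))
          = ENNReal.ofReal (∫ p, f (p, u)
              ∂((volume : Measure (abcPES k)).prod (volume : Measure (abcPES q)))) :=
        (ofReal_integral_eq_lintegral_ofReal hu
          (Eventually.of_forall fun p => hρnonneg _)).symm
      rw [h0]
      have h1 : (∫ p, f (p, u)
          ∂((volume : Measure (abcPES k)).prod (volume : Measure (abcPES q)))) = m' u := rfl
      rw [h1, show m' u = 0 from hmem, ENNReal.ofReal_zero]
    rw [lintegral_congr_ae hz, lintegral_zero]
  have condne : ∀ᵐ x ∂μW, m' x.2.2 ≠ 0 := by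
    rw [ae_iff]
    have hset : {x : abcPES k × abcPES q × abcPES d | ¬ m' x.2.2 ≠ 0}
        = (fun x : abcPES k × abcPES q × abcPES d => x.2.2) ⁻¹' {u : abcPES d | m' u = 0} := by
      ext x; simp
    rw [hset]
    exact hμWE
  -- quasi-measure-preserving projection to the third coordinate
  have q2 : Measure.QuasiMeasurePreserving (fun x : abcPES k × abcPES q × abcPES d => x.2.2)
      (volume : Measure (abcPES k × abcPES q × abcPES d)) (volume : Measure (abcPES d)) := by
    rw [hW]
    exact Measure.quasiMeasurePreserving_snd.comp Measure.quasiMeasurePreserving_snd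
  have condm := q2.ae (abcP_ae_lebesgue_point m' hm'int)
  have condeq : ∀ᵐ x ∂(volume : Measure (abcPES k × abcPES q × abcPES d)),
      m x.2.2 = m' x.2.2 := q2.ae hmm'
  -- parametrized Lebesgue points, transferred to the ambient space
  have hpar0 := abcP_ae_prod_lebesgue (μ := (volume : Measure (abcPES k × abcPES q))) f hfm
    hfintXY
  have hsec : ∀ᵐ w ∂((volume : Measure (abcPES k × abcPES q)).prod
      (volume : Measure (abcPES d))), Integrable (fun u => f (w.1, u)) volume :=
    Measure.quasiMeasurePreserving_fst.ae hfintXY.prod_right_ae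
  have hcomb := hpar0.and hsec
  have hsymm := MeasurePreserving.symm _ hpres
  have condf : ∀ᵐ x ∂(volume : Measure (abcPES k × abcPES q × abcPES d)),
      (Tendsto (fun n : ℕ =>
        (∫⁻ y in Metric.closedBall ((x.1, x.2.1), x.2.2).2 (1/((n:ℝ)+1)),
            (‖f (((x.1, x.2.1), x.2.2).1, y) - f ((x.1, x.2.1), x.2.2)‖₊ : ℝ≥0∞) ∂volume) /
          volume (Metric.closedBall ((x.1, x.2.1), x.2.2).2 (1/((n:ℝ)+1)))) atTop (nhds 0))
      ∧ Integrable (fun u => f (((x.1, x.2.1), x.2.2).1, u)) volume := by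
    rw [hXY] at hcomb
    rw [hW]
    exact hsymm.quasiMeasurePreserving.ae hcomb
  filter_upwards [hac.ae_le condm, hac.ae_le condeq, hac.ae_le condf, condne]
    with x hm1 heq2 hf3 hne4
  intro A r hAm hrpos hAsub hAc hvolto
  have hr0 : Tendsto r atTop (nhds 0) :=
    abcP_radius_tendsto_zero x.2.2 c hc A r hrpos hAc hvolto
  have hTm : Tendsto (fun t => (∫ u in A t, m' u) / (volume (A t)).toReal) atTop
      (nhds (m' x.2.2)) :=
    abcP_key_avg_tendsto m' hm'int.locallyIntegrable x.2.2 hm1 c hc A r hAm hrpos hAsub hAc hr0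
  have hTf : Tendsto (fun t => (∫ u in A t, f ((x.1, x.2.1), u)) / (volume (A t)).toReal) atTop
      (nhds (f ((x.1, x.2.1), x.2.2))) :=
    abcP_key_avg_tendsto (fun u => f ((x.1, x.2.1), u)) hf3.2.locallyIntegrable x.2.2 hf3.1
      c hc A r hAm hrpos hAsub hAc hr0
  have hdiv := hTf.div hTm hne4
  have hval : f ((x.1, x.2.1), x.2.2) / m' x.2.2 = ρ (x.1, x.2.1, x.2.2) / m x.2.2 := by
    rw [heq2]
  rw [← hval]
  refine Tendsto.congr (fun t => ?_) hdiv
  have hApos : 0 < volume (A t) :=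
    lt_of_lt_of_le (ENNReal.mul_pos (by simp [hc])
      (measure_closedBall_pos _ _ (hrpos t)).ne') (hAc t)
  have hAtop : volume (A t) < ⊤ :=
    lt_of_le_of_lt (measure_mono (hAsub t)) measure_closedBall_lt_top
  have hVne : (volume (A t)).toReal ≠ 0 :=
    (ENNReal.toReal_pos hApos.ne' hAtop.ne).ne'
  have hint_eq : ∫ u in A t, m u = ∫ u in A t, m' u :=
    integral_congr_ae (ae_restrict_of_ae hmm')
  rw [hint_eq]
  exact abcP_div_div _ _ _ hVne
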